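/- Let A₁, A₂, c ∈ ℂ with A₁ ≠ 0, A₂ ≠ 0, c ≠ 0 and A₁ + A₂ ≠ 0. Define width-2 rank-2 matrices S and R by: S (1,1) (1,1) = 1, S (2,2) (2,2) = -1, S (1,2) (2,1) = c, S (2,1) (1,2) = 1/c, all other entries of S equal to 0; and R (1,1) (1,1) = A₁, R (2,2) (2,2) = A₂, R (2,1) (2,1) = A₁ + A₂, R (2,1) (1,2) = A₁/c, R (1,2) (2,1) = -c*A₂, R (1,2) (1,2) = 0, all other entries of R equal to 0. Then the pair (S,R) satisfies the loop braid relations. -/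
import Mathlib


open Matrix

noncomputable section

/-- The width-3 matrix `M₁ = M ⊗ 1`. -/
def Lone {N : ℕ} (M : Matrix (Fin N × Fin N) (Fin N × Fin N) ℂ) :
    Matrix (Fin N × Fin N × Fin N) (Fin N × Fin N × Fin N) ℂ :=
  Matrix.of fun p q =>
    M (p.1, p.2.1) (q.1, q.2.1) * (if p.2.2 = q.2.2 then (1 : ℂ) else 0)

/-- The width-3 matrix `M₂ = 1 ⊗ M`. -/
def Ltwo {N : ℕ} (M : Matrix (Fin N × Fin N) (Fin N × Fin N) ℂ) :
    Matrix (Fin N × Fin N × Fin N) (Fin N × Fin N × Fin N) ℂ :=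
  Matrix.of fun p q =>
    (if p.1 = q.1 then (1 : ℂ) else 0) * M (p.2.1, p.2.2) (q.2.1, q.2.2)

/-- The pair (S,R) satisfies the loop braid relations. -/
def LoopBraid {N : ℕ} (S R : Matrix (Fin N × Fin N) (Fin N × Fin N) ℂ) : Prop :=
  S * S = 1 ∧
  Lone S * Ltwo S * Lone S = Ltwo S * Lone S * Ltwo S ∧
  Lone R * Ltwo R * Lone R = Ltwo R * Lone R * Ltwo R ∧
  Lone R * Ltwo R * Lone S = Ltwo S * Lone R * Ltwo R ∧
  Lone R * Ltwo S * Lone S = Ltwo S * Lone S * Ltwo R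

/-- A width-2 rank-N matrix is charge-conserving. -/
def ChargeConserving {N : ℕ} (M : Matrix (Fin N × Fin N) (Fin N × Fin N) ℂ) : Prop :=
  ∀ k l i j : Fin N, M (k, l) (i, j) ≠ 0 → ((k, l) = (i, j) ∨ (k, l) = (j, i))

/-- The element of `Fin 2` labelled `1`. -/
def e1 : Fin 2 := 0
/-- The element of `Fin 2` labelled `2`. -/
def e2 : Fin 2 := 1


lemma triple1 {n : ℕ} (M N P : Matrix (Fin n × Fin n) (Fin n × Fin n) ℂ)
    (a b g d e f : Fin n) :
    (Lone M * Ltwo N * Lone P) (a,b,g) (d,e,f)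
      = ∑ u, ∑ v, ∑ y, M (a,b) (u,y) * N (y,g) (v,f) * P (u,v) (d,e) := by
  simp only [Matrix.mul_apply, Lone, Ltwo, Matrix.of_apply, Fintype.sum_prod_type]
  simp [mul_ite, ite_mul, mul_zero, zero_mul, mul_one, one_mul, Finset.mul_sum,
    Finset.sum_mul, Finset.sum_ite_eq, Finset.sum_ite_eq']

lemma triple2 {n : ℕ} (M N P : Matrix (Fin n × Fin n) (Fin n × Fin n) ℂ)
    (a b g d e f : Fin n) :
    (Ltwo M * Lone N * Ltwo P) (a,b,g) (d,e,f)
      = ∑ v, ∑ w, ∑ y, M (b,g) (y,w) * N (a,y) (d,v) * P (v,w) (e,f) := by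
  simp only [Matrix.mul_apply, Lone, Ltwo, Matrix.of_apply, Fintype.sum_prod_type]
  simp [mul_ite, ite_mul, mul_zero, zero_mul, mul_one, one_mul, Finset.mul_sum,
    Finset.sum_mul, Finset.sum_ite_eq, Finset.sum_ite_eq']

set_option maxHeartbeats 1000000 in
theorem stmt2 (A₁ A₂ c : ℂ) (hA₁ : A₁ ≠ 0) (hA₂ : A₂ ≠ 0) (hc : c ≠ 0)
    (hsum : A₁ + A₂ ≠ 0)
    (S R : Matrix (Fin 2 × Fin 2) (Fin 2 × Fin 2) ℂ)
    (hS : S = Matrix.of fun p q =>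
      if p = (e1, e1) ∧ q = (e1, e1) then 1
      else if p = (e2, e2) ∧ q = (e2, e2) then -1
      else if p = (e1, e2) ∧ q = (e2, e1) then c
      else if p = (e2, e1) ∧ q = (e1, e2) then 1 / c
      else 0)
    (hR : R = Matrix.of fun p q =>
      if p = (e1, e1) ∧ q = (e1, e1) then A₁
      else if p = (e2, e2) ∧ q = (e2, e2) then A₂
      else if p = (e2, e1) ∧ q = (e2, e1) then A₁ + A₂
      else if p = (e2, e1) ∧ q = (e1, e2) then A₁ / c
      else if p = (e1, e2) ∧ q = (e2, e1) then -c * A₂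
      else 0) :
    LoopBraid S R := by
  have hS0000 : S (0,0) (0,0) = 1 := by rw [hS]; norm_num [e1, e2, Prod.ext_iff]
  have hS0001 : S (0,0) (0,1) = 0 := by rw [hS]; norm_num [e1, e2, Prod.ext_iff]
  have hS0010 : S (0,0) (1,0) = 0 := by rw [hS]; norm_num [e1, e2, Prod.ext_iff]
  have hS0011 : S (0,0) (1,1) = 0 := by rw [hS]; norm_num [e1, e2, Prod.ext_iff]
  have hS0100 : S (0,1) (0,0) = 0 := by rw [hS]; norm_num [e1, e2, Prod.ext_iff]
  have hS0101 : S (0,1) (0,1) = 0 := by rw [hS]; norm_num [e1, e2, Prod.ext_iff]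
  have hS0110 : S (0,1) (1,0) = c := by rw [hS]; norm_num [e1, e2, Prod.ext_iff]
  have hS0111 : S (0,1) (1,1) = 0 := by rw [hS]; norm_num [e1, e2, Prod.ext_iff]
  have hS1000 : S (1,0) (0,0) = 0 := by rw [hS]; norm_num [e1, e2, Prod.ext_iff]
  have hS1001 : S (1,0) (0,1) = 1/c := by rw [hS]; norm_num [e1, e2, Prod.ext_iff]
  have hS1010 : S (1,0) (1,0) = 0 := by rw [hS]; norm_num [e1, e2, Prod.ext_iff]
  have hS1011 : S (1,0) (1,1) = 0 := by rw [hS]; norm_num [e1, e2, Prod.ext_iff]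
  have hS1100 : S (1,1) (0,0) = 0 := by rw [hS]; norm_num [e1, e2, Prod.ext_iff]
  have hS1101 : S (1,1) (0,1) = 0 := by rw [hS]; norm_num [e1, e2, Prod.ext_iff]
  have hS1110 : S (1,1) (1,0) = 0 := by rw [hS]; norm_num [e1, e2, Prod.ext_iff]
  have hS1111 : S (1,1) (1,1) = -1 := by rw [hS]; norm_num [e1, e2, Prod.ext_iff]
  have hR0000 : R (0,0) (0,0) = A₁ := by rw [hR]; norm_num [e1, e2, Prod.ext_iff]
  have hR0001 : R (0,0) (0,1) = 0 := by rw [hR]; norm_num [e1, e2, Prod.ext_iff]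
  have hR0010 : R (0,0) (1,0) = 0 := by rw [hR]; norm_num [e1, e2, Prod.ext_iff]
  have hR0011 : R (0,0) (1,1) = 0 := by rw [hR]; norm_num [e1, e2, Prod.ext_iff]
  have hR0100 : R (0,1) (0,0) = 0 := by rw [hR]; norm_num [e1, e2, Prod.ext_iff]
  have hR0101 : R (0,1) (0,1) = 0 := by rw [hR]; norm_num [e1, e2, Prod.ext_iff]
  have hR0110 : R (0,1) (1,0) = -c*A₂ := by rw [hR]; norm_num [e1, e2, Prod.ext_iff]
  have hR0111 : R (0,1) (1,1) = 0 := by rw [hR]; norm_num [e1, e2, Prod.ext_iff]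
  have hR1000 : R (1,0) (0,0) = 0 := by rw [hR]; norm_num [e1, e2, Prod.ext_iff]
  have hR1001 : R (1,0) (0,1) = A₁/c := by rw [hR]; norm_num [e1, e2, Prod.ext_iff]
  have hR1010 : R (1,0) (1,0) = A₁+A₂ := by rw [hR]; norm_num [e1, e2, Prod.ext_iff]
  have hR1011 : R (1,0) (1,1) = 0 := by rw [hR]; norm_num [e1, e2, Prod.ext_iff]
  have hR1100 : R (1,1) (0,0) = 0 := by rw [hR]; norm_num [e1, e2, Prod.ext_iff]
  have hR1101 : R (1,1) (0,1) = 0 := by rw [hR]; norm_num [e1, e2, Prod.ext_iff]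
  have hR1110 : R (1,1) (1,0) = 0 := by rw [hR]; norm_num [e1, e2, Prod.ext_iff]
  have hR1111 : R (1,1) (1,1) = A₂ := by rw [hR]; norm_num [e1, e2, Prod.ext_iff]
  refine ⟨?_, ?_, ?_, ?_, ?_⟩
  · ext ⟨a,b⟩ ⟨d,e⟩
    fin_cases a <;> fin_cases b <;> fin_cases d <;> fin_cases e <;>
      simp only [Matrix.mul_apply, Fintype.sum_prod_type, Fin.sum_univ_two, Fin.isValue, Fin.mk_zero, Fin.mk_one, Fin.mk_zero, Fin.mk_one,
        Matrix.one_apply, hS0000, hS0001, hS0010, hS0011, hS0100, hS0101, hS0110, hS0111, hS1000, hS1001, hS1010, hS1011, hS1100, hS1101, hS1110, hS1111, hR0000, hR0001, hR0010, hR0011, hR0100, hR0101, hR0110, hR0111, hR1000, hR1001, hR1010, hR1011, hR1100, hR1101, hR1110, hR1111,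
        mul_zero, zero_mul, mul_one, one_mul, add_zero, zero_add] <;>
      (try norm_num [Prod.ext_iff, Fin.ext_iff]) <;> (try field_simp)
  · ext ⟨a,b,g⟩ ⟨d,e,f⟩
    rw [triple1, triple2]
    fin_cases a <;> fin_cases b <;> fin_cases g <;> fin_cases d <;> fin_cases e <;> fin_cases f <;>
      simp only [Fin.sum_univ_two, Fin.isValue, Fin.mk_zero, Fin.mk_one, hS0000, hS0001, hS0010, hS0011, hS0100, hS0101, hS0110, hS0111, hS1000, hS1001, hS1010, hS1011, hS1100, hS1101, hS1110, hS1111, hR0000, hR0001, hR0010, hR0011, hR0100, hR0101, hR0110, hR0111, hR1000, hR1001, hR1010, hR1011, hR1100, hR1101, hR1110, hR1111,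
        mul_zero, zero_mul, mul_one, one_mul, add_zero, zero_add, neg_mul, mul_neg, neg_neg, neg_zero] <;>
      (try norm_num) <;> (try field_simp) <;> (try ring)
  · ext ⟨a,b,g⟩ ⟨d,e,f⟩
    rw [triple1, triple2]
    fin_cases a <;> fin_cases b <;> fin_cases g <;> fin_cases d <;> fin_cases e <;> fin_cases f <;>
      simp only [Fin.sum_univ_two, Fin.isValue, Fin.mk_zero, Fin.mk_one, hS0000, hS0001, hS0010, hS0011, hS0100, hS0101, hS0110, hS0111, hS1000, hS1001, hS1010, hS1011, hS1100, hS1101, hS1110, hS1111, hR0000, hR0001, hR0010, hR0011, hR0100, hR0101, hR0110, hR0111, hR1000, hR1001, hR1010, hR1011, hR1100, hR1101, hR1110, hR1111,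
        mul_zero, zero_mul, mul_one, one_mul, add_zero, zero_add, neg_mul, mul_neg, neg_neg, neg_zero] <;>
      (try norm_num) <;> (try field_simp) <;> (try ring)
  · ext ⟨a,b,g⟩ ⟨d,e,f⟩
    rw [triple1, triple2]
    fin_cases a <;> fin_cases b <;> fin_cases g <;> fin_cases d <;> fin_cases e <;> fin_cases f <;>
      simp only [Fin.sum_univ_two, Fin.isValue, Fin.mk_zero, Fin.mk_one, hS0000, hS0001, hS0010, hS0011, hS0100, hS0101, hS0110, hS0111, hS1000, hS1001, hS1010, hS1011, hS1100, hS1101, hS1110, hS1111, hR0000, hR0001, hR0010, hR0011, hR0100, hR0101, hR0110, hR0111, hR1000, hR1001, hR1010, hR1011, hR1100, hR1101, hR1110, hR1111,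
        mul_zero, zero_mul, mul_one, one_mul, add_zero, zero_add, neg_mul, mul_neg, neg_neg, neg_zero] <;>
      (try norm_num) <;> (try field_simp) <;> (try ring)
  · ext ⟨a,b,g⟩ ⟨d,e,f⟩
    rw [triple1, triple2]
    fin_cases a <;> fin_cases b <;> fin_cases g <;> fin_cases d <;> fin_cases e <;> fin_cases f <;>
      simp only [Fin.sum_univ_two, Fin.isValue, Fin.mk_zero, Fin.mk_one, hS0000, hS0001, hS0010, hS0011, hS0100, hS0101, hS0110, hS0111, hS1000, hS1001, hS1010, hS1011, hS1100, hS1101, hS1110, hS1111, hR0000, hR0001, hR0010, hR0011, hR0100, hR0101, hR0110, hR0111, hR1000, hR1001, hR1010, hR1011, hR1100, hR1101, hR1110, hR1111,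
        mul_zero, zero_mul, mul_one, one_mul, add_zero, zero_add, neg_mul, mul_neg, neg_neg, neg_zero] <;>
      (try norm_num) <;> (try field_simp) <;> (try ring)
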